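/- Let f be the Fibonacci sequence with f_0 = f_1 = 1. For each fixed k ∈ ℕ, define the sequence b^{(k)} by b^{(k)}_n = f_{n+1}²/(f_k f_{k+1}) for n ≥ k and 0 for n < k. Then F̂ b^{(k)} = e^{(k)}, the k-th standard unit sequence; i.e., (f_n/f_{n+1}) b^{(k)}_n − (f_{n+1}/f_n) b^{(k)}_{n−1} equals 1 if n = k and 0 otherwise. -/

import Mathlib

open Filter Topology

def fibo : ℕ → ℕ
  | 0 => 1
  | 1 => 1
  | n + 2 => fibo (n + 1) + fibo n

noncomputable def Fhat (x : ℕ → ℝ) : ℕ → ℝ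
  | 0 => (fibo 0 : ℝ) / fibo 1 * x 0
  | k + 1 => (fibo (k + 1) : ℝ) / fibo (k + 2) * x (k + 1)
      - (fibo (k + 2) : ℝ) / fibo (k + 1) * x k

noncomputable def xseq (y : ℕ → ℝ) (k : ℕ) : ℝ :=
  ∑ j ∈ Finset.range (k + 1), ((fibo (k + 1) : ℝ) ^ 2 / ((fibo j : ℝ) * fibo (j + 1))) * y j

noncomputable def bseq (k : ℕ) (n : ℕ) : ℝ :=
  if k ≤ n then (fibo (n + 1) : ℝ) ^ 2 / ((fibo k : ℝ) * fibo (k + 1)) else 0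

lemma fibo_pos : ∀ n, 0 < fibo n
  | 0 => one_pos
  | 1 => one_pos
  | n + 2 => by
      rw [fibo]
      exact Nat.add_pos_left (fibo_pos (n + 1)) _

lemma fibo_ne (n : ℕ) : (fibo n : ℝ) ≠ 0 := by
  exact_mod_cast (fibo_pos n).ne'

theorem Fhat_bseq (k n : ℕ) :
    Fhat (bseq k) n = if n = k then 1 else 0 := by
  cases n with
  | zero =>
    show (fibo 0 : ℝ) / fibo 1 * bseq k 0 = _
    rcases Nat.eq_zero_or_pos k with hk | hk
    · subst hk
      simp [bseq, fibo]
    · rw [bseq, if_neg (by omega), if_neg (by omega)]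
      ring
  | succ n =>
    show (fibo (n + 1) : ℝ) / fibo (n + 2) * bseq k (n + 1)
        - (fibo (n + 2) : ℝ) / fibo (n + 1) * bseq k n = _
    rcases lt_trichotomy k (n + 1) with h | h | h
    · rw [bseq, bseq, if_pos (by omega), if_pos (by omega), if_neg (by omega)]
      field_simp [fibo_ne]
      ring
    · subst h
      rw [bseq, bseq, if_pos (le_refl _), if_neg (by omega), if_pos rfl]
      field_simp [fibo_ne]
      ring_nf; field_simp [fibo_ne]; exact div_self (mul_ne_zero (fibo_ne _) (fibo_ne _))
    · rw [bseq, bseq, if_neg (by omega), if_neg (by omega), if_neg (by omega)]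
      ring
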